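/- Let F : D_F → Y satisfy the two-sided Lipschitz condition (1/M₁)‖f₁−f₂‖_{X₋} ≤ ‖F(f₁)−F(f₂)‖_Y ≤ M₂‖f₁−f₂‖_{X₋} on a subset D_F of a quasi-Banach space X_R with continuous embedding X_R ⊆ X₋. Let f ∈ (X₋,X_R)_{θ,∞} with norm at most ϱ, θ ∈ (0,1], u > 0, α > 0, and suppose f_t ∈ D_F for the approximations from the K-functional with t = c α^{1/((1−θ)u+2θ)} ϱ^{(u−2)/((1−θ)u+2θ)}. If f_α minimizes h ↦ (1/(2α))‖F(f)−F(h)‖_Y² + (1/u)‖h‖_{X_R}^u over D_F, then there is a constant C (depending only on M₁, M₂, u, θ, c and the quasi-norm constant of X_R) with ‖f − f_α‖_{X₋} ≤ C ϱ^{u/((1−θ)u+2θ)} α^{θ/((1−θ)u+2θ)} and ‖f_α‖_{X_R} ≤ C ϱ^{2/((1−θ)u+2θ)} α^{(θ−1)/((1−θ)u+2θ)}. -/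

import Mathlib

open Set

private lemma exp_rpow_aux (z y : ℝ) : Real.exp z ^ y = Real.exp (y * z) := by
  rw [Real.rpow_def_of_pos (Real.exp_pos z), Real.log_exp, mul_comm]


/-- The K-functional `K(t,f) = inf_{h ∈ X_R} (‖f−h‖_{X₋} + t‖h‖_{X_R})`. -/
noncomputable def Kfun {E : Type*} [AddCommGroup E]
    (Nm : E → ℝ) (X : Set E) (NX : E → ℝ) (t : ℝ) (f : E) : ℝ :=
  sInf ((fun h => Nm (f - h) + t * NX h) '' X)

/-- Bias bounds for oversmoothing Tikhonov regularization with exact data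
(Theorem 2.4(a)): under a two-sided Lipschitz condition on `F` w.r.t. `‖·‖_{X₋}`,
for `f ∈ (X₋,X_R)_{θ,∞}` with norm `≤ ϱ`, if `f_t ∈ D_F` is the K-functional
approximation for `t = c α^{1/D} ϱ^{(u−2)/D}` (`D := (1−θ)u+2θ`) and `f_α`
minimizes the Tikhonov functional with exact data `F(f)`, then
`‖f − f_α‖_{X₋} ≤ C ϱ^{u/D} α^{θ/D}` and `‖f_α‖_{X_R} ≤ C ϱ^{2/D} α^{(θ−1)/D}`,
with `C` depending only on `M₁, M₂, u, θ, c` (and the quasi-norm constant). -/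
theorem oversmoothing_bias_bounds {E Y : Type*} [AddCommGroup E] [NormedAddCommGroup Y]
    (Nm NR : E → ℝ) (XR DF : Set E) (F : E → Y)
    (M₁ M₂ u θ c : ℝ) (hM₁ : 0 < M₁) (hM₂ : 0 < M₂) (hu : 0 < u)
    (hθ0 : 0 < θ) (hθ1 : θ ≤ 1) (hc : 0 < c)
    (hNm : ∀ g, 0 ≤ Nm g) (hNR : ∀ g, 0 ≤ NR g) :
    ∃ C > 0, ∀ (f : E) (ϱ α : ℝ) (fα ft : E), 0 < ϱ → 0 < α →
      -- two-sided Lipschitz condition on `D_F ∪ {f}`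
      (∀ f₁ ∈ insert f DF, ∀ f₂ ∈ insert f DF,
        M₁⁻¹ * Nm (f₁ - f₂) ≤ ‖F f₁ - F f₂‖ ∧ ‖F f₁ - F f₂‖ ≤ M₂ * Nm (f₁ - f₂)) →
      -- `f ∈ (X₋,X_R)_{θ,∞}` with norm at most `ϱ`
      (∀ t > 0, Kfun Nm XR NR t f ≤ ϱ * t ^ θ) →
      -- the K-functional approximation `f_t` for the specific parameter `t₀`
      (ft ∈ DF ∧
        Nm (f - ft) ≤ 2 * ϱ * (c * α ^ ((1 : ℝ) / ((1 - θ) * u + 2 * θ)) *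
          ϱ ^ ((u - 2) / ((1 - θ) * u + 2 * θ))) ^ θ ∧
        NR ft ≤ 2 * ϱ * (c * α ^ ((1 : ℝ) / ((1 - θ) * u + 2 * θ)) *
          ϱ ^ ((u - 2) / ((1 - θ) * u + 2 * θ))) ^ (θ - 1)) →
      -- `f_α` minimizes the Tikhonov functional with exact data `F(f)` over `D_F`
      (fα ∈ DF ∧ ∀ h ∈ DF,
        1 / (2 * α) * ‖F f - F fα‖ ^ 2 + 1 / u * NR fα ^ u ≤
          1 / (2 * α) * ‖F f - F h‖ ^ 2 + 1 / u * NR h ^ u) →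
      Nm (f - fα) ≤ C * ϱ ^ (u / ((1 - θ) * u + 2 * θ)) * α ^ (θ / ((1 - θ) * u + 2 * θ)) ∧
      NR fα ≤ C * ϱ ^ ((2 : ℝ) / ((1 - θ) * u + 2 * θ)) *
        α ^ ((θ - 1) / ((1 - θ) * u + 2 * θ)) := by
  set D : ℝ := (1 - θ) * u + 2 * θ with hDdef
  have hD : 0 < D := by nlinarith
  have hDne : D ≠ 0 := hD.ne'
  have hune : u ≠ 0 := hu.ne'
  set K₁ : ℝ := 2 * M₂ ^ 2 * Real.exp (2 * θ * Real.log c)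
      + Real.exp (u * Real.log 2) / u * Real.exp ((θ - 1) * u * Real.log c) with hK₁def
  have hK₁ : 0 < K₁ := by positivity
  refine ⟨M₁ * Real.sqrt (2 * K₁) + (u * K₁) ^ ((1:ℝ) / u), by positivity, ?_⟩
  intro f ϱ α fα ft hϱ hα hLip _hK hft hmin
  obtain ⟨hftDF, h1, h2⟩ := hft
  obtain ⟨hfαDF, hminle⟩ := hmin
  set T : ℝ := Real.log c + 1 / D * Real.log α + (u - 2) / D * Real.log ϱ with hTdef
  set Ee : ℝ := 2 * u / D * Real.log ϱ + (θ - 1) * u / D * Real.log α with hEdef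
  have ht₀ : c * α ^ ((1:ℝ) / D) * ϱ ^ ((u - 2) / D) = Real.exp T := by
    rw [Real.rpow_def_of_pos hα, Real.rpow_def_of_pos hϱ]
    conv_lhs => rw [← Real.exp_log hc]
    rw [← Real.exp_add, ← Real.exp_add, hTdef]
    congr 1; ring
  rw [ht₀, exp_rpow_aux] at h1
  rw [ht₀, exp_rpow_aux] at h2
  -- the key computation: the Tikhonov value at ft equals K₁ * exp Ee
  have hB1 : 1 / (2 * α) * (M₂ * (2 * ϱ * Real.exp (θ * T))) ^ 2
      = 2 * M₂ ^ 2 * Real.exp (2 * θ * Real.log c) * Real.exp Ee := by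
    have key : ϱ ^ 2 * Real.exp (θ * T) ^ 2
        = α * (Real.exp (2 * θ * Real.log c) * Real.exp Ee) := by
      rw [pow_two, pow_two, ← Real.exp_add]
      conv_lhs => rw [← Real.exp_log hϱ]
      rw [← Real.exp_add, ← Real.exp_add]
      conv_rhs => rw [← Real.exp_log hα]
      rw [← Real.exp_add, ← Real.exp_add]
      congr 1
      rw [hTdef, hEdef]
      field_simp
      rw [hDdef]
      ring
    have expand : 1 / (2 * α) * (M₂ * (2 * ϱ * Real.exp (θ * T))) ^ 2
        = 2 * M₂ ^ 2 * (ϱ ^ 2 * Real.exp (θ * T) ^ 2) / α := by ring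
    rw [expand, key]
    field_simp
  have hB2 : 1 / u * (2 * ϱ * Real.exp ((θ - 1) * T)) ^ u
      = Real.exp (u * Real.log 2) / u * Real.exp ((θ - 1) * u * Real.log c) * Real.exp Ee := by
    have e2 : 2 * ϱ * Real.exp ((θ - 1) * T)
        = Real.exp (Real.log 2 + Real.log ϱ + (θ - 1) * T) := by
      rw [Real.exp_add, Real.exp_add, Real.exp_log two_pos, Real.exp_log hϱ]
    rw [e2, exp_rpow_aux]
    have : Real.exp (u * (Real.log 2 + Real.log ϱ + (θ - 1) * T))
        = Real.exp (u * Real.log 2) * Real.exp ((θ - 1) * u * Real.log c) * Real.exp Ee := by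
      rw [← Real.exp_add, ← Real.exp_add]
      congr 1
      rw [hTdef, hEdef]
      field_simp
      rw [hDdef]
      ring
    rw [this]; ring
  -- Tikhonov comparison
  have hup : ‖F f - F ft‖ ≤ M₂ * (2 * ϱ * Real.exp (θ * T)) :=
    le_trans (hLip f (mem_insert f DF) ft (mem_insert_of_mem f hftDF)).2
      (mul_le_mul_of_nonneg_left h1 hM₂.le)
  have hrhs : 1 / (2 * α) * ‖F f - F fα‖ ^ 2 + 1 / u * NR fα ^ u ≤ K₁ * Real.exp Ee := by
    refine le_trans (hminle ft hftDF) ?_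
    have t1 : 1 / (2 * α) * ‖F f - F ft‖ ^ 2
        ≤ 1 / (2 * α) * (M₂ * (2 * ϱ * Real.exp (θ * T))) ^ 2 :=
      mul_le_mul_of_nonneg_left (pow_le_pow_left₀ (norm_nonneg _) hup 2) (by positivity)
    have t2 : 1 / u * NR ft ^ u ≤ 1 / u * (2 * ϱ * Real.exp ((θ - 1) * T)) ^ u :=
      mul_le_mul_of_nonneg_left (Real.rpow_le_rpow (hNR ft) h2 hu.le) (by positivity)
    calc 1 / (2 * α) * ‖F f - F ft‖ ^ 2 + 1 / u * NR ft ^ u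
        ≤ 1 / (2 * α) * (M₂ * (2 * ϱ * Real.exp (θ * T))) ^ 2
          + 1 / u * (2 * ϱ * Real.exp ((θ - 1) * T)) ^ u := add_le_add t1 t2
      _ = K₁ * Real.exp Ee := by rw [hB1, hB2, hK₁def]; ring
  have hnorm_nonneg : (0:ℝ) ≤ 1 / (2 * α) * ‖F f - F fα‖ ^ 2 := by positivity
  have hNR_nonneg : (0:ℝ) ≤ 1 / u * NR fα ^ u := by
    have := Real.rpow_nonneg (hNR fα) u
    positivity
  constructor
  · -- bound on Nm (f - fα)
    have hsq : ‖F f - F fα‖ ^ 2 ≤ 2 * α * (K₁ * Real.exp Ee) := by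
      have h' : 1 / (2 * α) * ‖F f - F fα‖ ^ 2 ≤ K₁ * Real.exp Ee := by linarith
      calc ‖F f - F fα‖ ^ 2 = 2 * α * (1 / (2 * α) * ‖F f - F fα‖ ^ 2) := by
            field_simp
        _ ≤ 2 * α * (K₁ * Real.exp Ee) := by
            exact mul_le_mul_of_nonneg_left h' (by positivity)
    have hFb : ‖F f - F fα‖ ≤ Real.sqrt (2 * α * (K₁ * Real.exp Ee)) := by
      have := Real.sqrt_le_sqrt hsq
      rwa [Real.sqrt_sq (norm_nonneg _)] at this
    have hsqrt : Real.sqrt (2 * α * (K₁ * Real.exp Ee))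
        = Real.sqrt (2 * K₁) * (ϱ ^ (u / D) * α ^ (θ / D)) := by
      have e3 : 2 * α * (K₁ * Real.exp Ee) = 2 * K₁ * Real.exp (Real.log α + Ee) := by
        rw [Real.exp_add (Real.log α) Ee, Real.exp_log hα]
        ring
      rw [e3, Real.sqrt_mul (by positivity), Real.sqrt_eq_rpow (Real.exp _), exp_rpow_aux]
      congr 1
      rw [Real.rpow_def_of_pos hϱ, Real.rpow_def_of_pos hα, ← Real.exp_add]
      congr 1
      rw [hEdef]
      field_simp
      rw [hDdef]
      ring
    have hNmb : Nm (f - fα) ≤ M₁ * ‖F f - F fα‖ := by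
      have h' := (hLip f (mem_insert f DF) fα (mem_insert_of_mem f hfαDF)).1
      calc Nm (f - fα) = M₁ * (M₁⁻¹ * Nm (f - fα)) := by field_simp
        _ ≤ M₁ * ‖F f - F fα‖ := mul_le_mul_of_nonneg_left h' hM₁.le
    calc Nm (f - fα) ≤ M₁ * ‖F f - F fα‖ := hNmb
      _ ≤ M₁ * (Real.sqrt (2 * K₁) * (ϱ ^ (u / D) * α ^ (θ / D))) := by
          rw [← hsqrt]; exact mul_le_mul_of_nonneg_left hFb hM₁.le
      _ ≤ (M₁ * Real.sqrt (2 * K₁) + (u * K₁) ^ ((1:ℝ) / u)) * ϱ ^ (u / D) * α ^ (θ / D) := by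
          have hpos : (0:ℝ) ≤ ϱ ^ (u / D) * α ^ (θ / D) := by positivity
          have hCle : M₁ * Real.sqrt (2 * K₁)
              ≤ M₁ * Real.sqrt (2 * K₁) + (u * K₁) ^ ((1:ℝ) / u) := by
            have : (0:ℝ) ≤ (u * K₁) ^ ((1:ℝ) / u) := by positivity
            linarith
          calc M₁ * (Real.sqrt (2 * K₁) * (ϱ ^ (u / D) * α ^ (θ / D)))
              = M₁ * Real.sqrt (2 * K₁) * (ϱ ^ (u / D) * α ^ (θ / D)) := by ring
            _ ≤ (M₁ * Real.sqrt (2 * K₁) + (u * K₁) ^ ((1:ℝ) / u))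
                  * (ϱ ^ (u / D) * α ^ (θ / D)) := mul_le_mul_of_nonneg_right hCle hpos
            _ = _ := by ring
  · -- bound on NR fα
    have hXu : NR fα ^ u ≤ u * (K₁ * Real.exp Ee) := by
      have h' : 1 / u * NR fα ^ u ≤ K₁ * Real.exp Ee := by linarith
      calc NR fα ^ u = u * (1 / u * NR fα ^ u) := by field_simp
        _ ≤ u * (K₁ * Real.exp Ee) := mul_le_mul_of_nonneg_left h' hu.le
    have hb : NR fα ≤ (u * (K₁ * Real.exp Ee)) ^ u⁻¹ := by
      have h3 := Real.rpow_le_rpow (Real.rpow_nonneg (hNR fα) u) hXu (inv_nonneg.mpr hu.le)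
      rwa [Real.rpow_rpow_inv (hNR fα) hune] at h3
    have heq : (u * (K₁ * Real.exp Ee)) ^ u⁻¹
        = (u * K₁) ^ ((1:ℝ) / u) * (ϱ ^ ((2:ℝ) / D) * α ^ ((θ - 1) / D)) := by
      rw [← mul_assoc, Real.mul_rpow (by positivity) (Real.exp_pos Ee).le, exp_rpow_aux,
        one_div]
      congr 1
      rw [Real.rpow_def_of_pos hϱ, Real.rpow_def_of_pos hα, ← Real.exp_add]
      congr 1
      rw [hEdef, hDdef]
      field_simp
    calc NR fα ≤ (u * (K₁ * Real.exp Ee)) ^ u⁻¹ := hb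
      _ = (u * K₁) ^ ((1:ℝ) / u) * (ϱ ^ ((2:ℝ) / D) * α ^ ((θ - 1) / D)) := heq
      _ ≤ (M₁ * Real.sqrt (2 * K₁) + (u * K₁) ^ ((1:ℝ) / u))
            * ϱ ^ ((2:ℝ) / D) * α ^ ((θ - 1) / D) := by
          have hpos : (0:ℝ) ≤ ϱ ^ ((2:ℝ) / D) * α ^ ((θ - 1) / D) := by positivity
          have hCle : (u * K₁) ^ ((1:ℝ) / u)
              ≤ M₁ * Real.sqrt (2 * K₁) + (u * K₁) ^ ((1:ℝ) / u) := by
            have : (0:ℝ) ≤ M₁ * Real.sqrt (2 * K₁) := by positivity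
            linarith
          calc (u * K₁) ^ ((1:ℝ) / u) * (ϱ ^ ((2:ℝ) / D) * α ^ ((θ - 1) / D))
              ≤ (M₁ * Real.sqrt (2 * K₁) + (u * K₁) ^ ((1:ℝ) / u))
                  * (ϱ ^ ((2:ℝ) / D) * α ^ ((θ - 1) / D)) :=
                mul_le_mul_of_nonneg_right hCle hpos
            _ = _ := by ring
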